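/- Let n ≥ 1, let a > 0, let B_a = {x ∈ ℝⁿ : |x| ≤ a}, and let f ∈ L²(ℝⁿ, ℂ) vanish almost everywhere outside B_a. Define the Fourier transform f̃(ξ) = ∫_{B_a} f(x) e^{i ξ · x} dx for ξ ∈ ℝⁿ. If f̃ vanishes on some nonempty open subset D̃ ⊂ ℝⁿ, then f = 0 almost everywhere. -/

import Mathlib

open MeasureTheory Complex Filter
open scoped FourierTransform RealInnerProductSpace ContDiff

/-- Differentiation under the integral sign for `z ↦ ∫ f x * exp (I S x + z I T x)`,
assuming `T` is a.e. bounded. -/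
lemma hasDerivAt_exp_integral {α : Type*} [MeasurableSpace α] {μ : Measure α}
    {f : α → ℂ} (hf : Integrable f μ) {S T : α → ℝ}
    (hS : AEStronglyMeasurable S μ) (hT : AEStronglyMeasurable T μ)
    {M : ℝ} (hM : 0 ≤ M) (hTM : ∀ᵐ x ∂μ, |T x| ≤ M) (z₀ : ℂ) :
    HasDerivAt (fun z : ℂ => ∫ x, f x * Complex.exp (Complex.I * S x + z * (Complex.I * T x)) ∂μ)
      (∫ x, f x * (Complex.I * T x) *
        Complex.exp (Complex.I * S x + z₀ * (Complex.I * T x)) ∂μ) z₀ := by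
  set K : ℝ := Real.exp ((|z₀.im| + 1) * M) with hK
  have hre : ∀ (z : ℂ) (s t : ℝ),
      (Complex.I * s + z * (Complex.I * t)).re = -(z.im * t) := by
    intro z s t
    simp [Complex.add_re, Complex.mul_re, Complex.mul_im]
  have hball : ∀ z ∈ Metric.ball z₀ 1, |z.im| ≤ |z₀.im| + 1 := by
    intro z hz
    have h1 : |z.im - z₀.im| ≤ ‖z - z₀‖ := by
      simpa using Complex.abs_im_le_norm (z - z₀)
    have h2 : ‖z - z₀‖ ≤ 1 := by
      rw [Metric.mem_ball] at hz
      have h3 : dist z z₀ = ‖z - z₀‖ := dist_eq_norm z z₀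
      linarith [h3 ▸ hz.le]
    calc |z.im| = |z₀.im + (z.im - z₀.im)| := by ring_nf
      _ ≤ |z₀.im| + |z.im - z₀.im| := abs_add_le _ _
      _ ≤ |z₀.im| + 1 := by linarith
  have hexp_bound : ∀ z ∈ Metric.ball z₀ 1, ∀ t : ℝ, |t| ≤ M →
      Real.exp (-(z.im * t)) ≤ K := by
    intro z hz t ht
    rw [hK]
    apply Real.exp_le_exp.2
    calc -(z.im * t) ≤ |z.im * t| := neg_le_abs _
      _ = |z.im| * |t| := abs_mul _ _
      _ ≤ (|z₀.im| + 1) * M := by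
          apply mul_le_mul (hball z hz) ht (abs_nonneg _)
          positivity
  have hmeasF : ∀ z : ℂ, AEStronglyMeasurable
      (fun x => f x * Complex.exp (Complex.I * S x + z * (Complex.I * T x))) μ := by
    intro z
    apply hf.1.mul
    apply Complex.continuous_exp.comp_aestronglyMeasurable
    exact ((Complex.continuous_ofReal.comp_aestronglyMeasurable hS).const_mul Complex.I).add
      (((Complex.continuous_ofReal.comp_aestronglyMeasurable hT).const_mul Complex.I).const_mul z)
  have hmeasF' : AEStronglyMeasurable
      (fun x => f x * (Complex.I * T x) *
        Complex.exp (Complex.I * S x + z₀ * (Complex.I * T x))) μ := by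
    apply AEStronglyMeasurable.mul
    · exact hf.1.mul ((Complex.continuous_ofReal.comp_aestronglyMeasurable hT).const_mul Complex.I)
    · apply Complex.continuous_exp.comp_aestronglyMeasurable
      exact ((Complex.continuous_ofReal.comp_aestronglyMeasurable hS).const_mul Complex.I).add
        (((Complex.continuous_ofReal.comp_aestronglyMeasurable hT).const_mul
          Complex.I).const_mul z₀)
  have key := hasDerivAt_integral_of_dominated_loc_of_deriv_le
    (F := fun z x => f x * Complex.exp (Complex.I * S x + z * (Complex.I * T x)))
    (F' := fun z x => f x * (Complex.I * T x) *
      Complex.exp (Complex.I * S x + z * (Complex.I * T x)))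
    (x₀ := z₀) (bound := fun x => ‖f x‖ * (M * K)) (Metric.ball_mem_nhds z₀ one_pos)
    (Eventually.of_forall hmeasF) ?_ hmeasF' ?_ ?_ ?_
  · exact key.2
  · -- integrability of F z₀
    apply Integrable.mono' (hf.norm.mul_const K) (hmeasF z₀)
    filter_upwards [hTM] with x hx
    rw [norm_mul, Complex.norm_exp, hre]
    exact mul_le_mul_of_nonneg_left
      (hexp_bound z₀ (Metric.mem_ball_self one_pos) _ hx) (norm_nonneg _)
  · -- bound for F'
    filter_upwards [hTM] with x hx z hz
    rw [norm_mul, norm_mul, Complex.norm_exp, hre]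
    have h1 : ‖Complex.I * (T x : ℂ)‖ ≤ M := by
      rw [norm_mul, Complex.norm_I, one_mul, Complex.norm_real,
        Real.norm_eq_abs]
      exact hx
    have h2 : Real.exp (-(z.im * T x)) ≤ K := hexp_bound z hz _ hx
    calc ‖f x‖ * ‖Complex.I * (T x : ℂ)‖ * Real.exp (-(z.im * T x))
        ≤ ‖f x‖ * M * K := by
          apply mul_le_mul (mul_le_mul_of_nonneg_left h1 (norm_nonneg _)) h2
            (Real.exp_nonneg _)
          positivity
      _ = ‖f x‖ * (M * K) := by ring
  · exact (hf.norm.mul_const (M * K))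
  · -- differentiability in z, for each x
    filter_upwards with x z _
    have h1 : HasDerivAt (fun z : ℂ => Complex.I * S x + z * (Complex.I * T x))
        (Complex.I * T x) z := by
      simpa using ((hasDerivAt_id z).mul_const (Complex.I * (T x : ℂ))).const_add
        (Complex.I * (S x : ℂ))
    have h2 := h1.cexp
    have h3 := h2.const_mul (f x)
    exact h3.congr_deriv (by ring)

/-- A smooth compactly supported function is a Schwartz function. -/
noncomputable def mySchwartz {V : Type*} [NormedAddCommGroup V] [NormedSpace ℝ V]
    (g : V → ℂ) (hg : ContDiff ℝ ∞ g) (h2 : HasCompactSupport g) :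
    SchwartzMap V ℂ where
  toFun := g
  smooth' := hg
  decay' := by
    intro k m
    have hsupp : HasCompactSupport (fun x => ‖x‖ ^ k * ‖iteratedFDeriv ℝ m g x‖) := by
      have h3 : HasCompactSupport (fun x => ‖iteratedFDeriv ℝ m g x‖) :=
        (h2.iteratedFDeriv m).comp_left (g := norm) norm_zero
      exact h3.mul_left
    have hcont : Continuous (fun x => ‖x‖ ^ k * ‖iteratedFDeriv ℝ m g x‖) :=
      (continuous_norm.pow k).mul (hg.continuous_iteratedFDeriv (by exact_mod_cast le_top)).norm
    obtain ⟨C, hC⟩ := hsupp.exists_bound_of_continuous hcont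
    refine ⟨C, fun x => ?_⟩
    have h := hC x
    rw [Real.norm_eq_abs, _root_.abs_of_nonneg (by positivity)] at h
    exact h

theorem fourier_transform_compact_support_uniqueness
    (n : ℕ) (hn : 1 ≤ n) (a : ℝ) (ha : 0 < a)
    (f : EuclideanSpace ℝ (Fin n) → ℂ)
    (hf : MemLp f 2 (volume : Measure (EuclideanSpace ℝ (Fin n))))
    (hsupp : ∀ᵐ x : EuclideanSpace ℝ (Fin n),
      x ∉ Metric.closedBall (0 : EuclideanSpace ℝ (Fin n)) a → f x = 0)
    (Dt : Set (EuclideanSpace ℝ (Fin n))) (hDt : IsOpen Dt) (hDtne : Dt.Nonempty)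
    (hvanish : ∀ ξ ∈ Dt,
      ∫ x in Metric.closedBall (0 : EuclideanSpace ℝ (Fin n)) a,
        f x * Complex.exp (Complex.I * (∑ k, ξ k * x k : ℝ)) = 0) :
    f =ᵐ[volume] 0 := by
  set B : Set (EuclideanSpace ℝ (Fin n)) :=
    Metric.closedBall (0 : EuclideanSpace ℝ (Fin n)) a with hB
  have hBmeas : MeasurableSet B := measurableSet_closedBall
  set g : EuclideanSpace ℝ (Fin n) → ℂ := B.indicator f with hgdef
  -- g = f a.e.
  have hgf : g =ᵐ[volume] f := by
    filter_upwards [hsupp] with x hx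
    by_cases h : x ∈ B
    · simp [hgdef, Set.indicator_of_mem h]
    · simp [hgdef, Set.indicator_of_notMem h, hx h]
  -- g is integrable
  have hg2 : MemLp g 2 (volume : Measure (EuclideanSpace ℝ (Fin n))) := hf.ae_eq hgf.symm
  have hgint : Integrable g (volume : Measure (EuclideanSpace ℝ (Fin n))) := by
    rw [← memLp_one_iff_integrable]
    exact hg2.mono_exponent_of_measure_support_ne_top
      (fun x hx => Set.indicator_of_notMem hx f)
      (measure_closedBall_lt_top).ne (by norm_num)
  have hfB : IntegrableOn f B (volume : Measure (EuclideanSpace ℝ (Fin n))) := by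
    apply (hgint.restrict (s := B)).congr
    exact indicator_ae_eq_restrict hBmeas
  -- the inner product as a sum
  have hsum : ∀ ξ x : EuclideanSpace ℝ (Fin n), (∑ k, ξ k * x k) = ⟪ξ, x⟫ := by
    intro ξ x
    rw [PiLp.inner_apply]
    simp [RCLike.inner_apply, mul_comm]
  -- Key step : the Fourier-type integral vanishes everywhere
  obtain ⟨ξ₀, hξ₀⟩ := hDtne
  obtain ⟨ε, hε, hball⟩ := Metric.isOpen_iff.1 hDt ξ₀ hξ₀
  have key : ∀ ξ : EuclideanSpace ℝ (Fin n),
      ∫ x in B, f x * Complex.exp (Complex.I * (∑ k, ξ k * x k : ℝ)) = 0 := by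
    intro η
    set v : EuclideanSpace ℝ (Fin n) := η - ξ₀ with hv
    set S : EuclideanSpace ℝ (Fin n) → ℝ := fun x => ⟪ξ₀, x⟫ with hS
    set T : EuclideanSpace ℝ (Fin n) → ℝ := fun x => ⟪v, x⟫ with hT
    have hScont : Continuous S := continuous_const.inner continuous_id
    have hTcont : Continuous T := continuous_const.inner continuous_id
    have hTM : ∀ᵐ x ∂(volume : Measure (EuclideanSpace ℝ (Fin n))).restrict B,
        |T x| ≤ ‖v‖ * a := by
      rw [ae_restrict_iff' hBmeas]
      filter_upwards with x hx
      calc |T x| ≤ ‖v‖ * ‖x‖ := abs_real_inner_le_norm v x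
        _ ≤ ‖v‖ * a := by
            apply mul_le_mul_of_nonneg_left _ (norm_nonneg v)
            simpa [hB] using mem_closedBall_zero_iff.1 hx
    set G : ℂ → ℂ := fun z =>
      ∫ x in B, f x * Complex.exp (Complex.I * S x + z * (Complex.I * T x)) with hG
    have hGdiff : Differentiable ℂ G := fun z =>
      (hasDerivAt_exp_integral hfB hScont.aestronglyMeasurable hTcont.aestronglyMeasurable
        (by positivity) hTM z).differentiableAt
    have hGanalytic : AnalyticOnNhd ℂ G Set.univ :=
      hGdiff.differentiableOn.analyticOnNhd isOpen_univ
    -- G vanishes at small real arguments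
    have hGreal : ∀ t : ℝ, ξ₀ + t • v ∈ Dt → G (t : ℂ) = 0 := by
      intro t ht
      have hv0 := hvanish (ξ₀ + t • v) ht
      rw [hG]
      rw [← hv0]
      apply setIntegral_congr_fun hBmeas
      intro x _
      dsimp only
      congr 1
      rw [hsum (ξ₀ + t • v) x]
      have h1 : ⟪ξ₀ + t • v, x⟫ = S x + t * T x := by
        rw [hS, hT]
        simp only [inner_add_left, real_inner_smul_left]
      rw [h1]
      push_cast
      ring
    have hsmall : ∀ t : ℝ, |t| * ‖v‖ < ε → G (t : ℂ) = 0 := by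
      intro t ht
      apply hGreal
      apply hball
      rw [Metric.mem_ball]
      have hd : dist (ξ₀ + t • v) ξ₀ = ‖t • v‖ := by
        rw [dist_eq_norm]
        congr 1
        abel
      rw [hd, norm_smul]
      simpa [Real.norm_eq_abs] using ht
    -- frequently zero near 0
    have hfreq : ∃ᶠ z in nhdsWithin (0 : ℂ) {(0 : ℂ)}ᶜ, G z = 0 := by
      rw [Filter.frequently_iff]
      intro U hU
      obtain ⟨r, hr, hrU⟩ := Metric.mem_nhdsWithin_iff.1 hU
      set δ : ℝ := min (r / 2) (ε / (2 * (‖v‖ + 1))) with hδ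
      have hδpos : 0 < δ := by
        apply lt_min (by linarith)
        positivity
      refine ⟨(δ : ℂ), hrU ⟨?_, ?_⟩, ?_⟩
      · rw [Metric.mem_ball]
        have hd : dist (δ : ℂ) 0 = |δ| := by
          simp [Complex.dist_eq]
        rw [hd, abs_of_pos hδpos]
        calc δ ≤ r / 2 := min_le_left _ _
          _ < r := by linarith
      · simp only [Set.mem_compl_iff, Set.mem_singleton_iff]
        exact_mod_cast hδpos.ne'
      · apply hsmall
        have h1 : δ ≤ ε / (2 * (‖v‖ + 1)) := min_le_right _ _
        have h2 : ‖v‖ < ‖v‖ + 1 := by linarith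
        have h3 : (0:ℝ) < ‖v‖ + 1 := by positivity
        rw [abs_of_pos hδpos]
        calc δ * ‖v‖ ≤ (ε / (2 * (‖v‖ + 1))) * (‖v‖ + 1) := by
              apply mul_le_mul h1 h2.le (norm_nonneg v) (by positivity)
          _ = ε / 2 := by field_simp
          _ < ε := by linarith
    have hGzero : Set.EqOn G 0 Set.univ :=
      hGanalytic.eqOn_zero_of_preconnected_of_frequently_eq_zero
        isPreconnected_univ (Set.mem_univ (0 : ℂ)) hfreq
    have hG1 : G 1 = 0 := hGzero (Set.mem_univ 1)
    rw [← hG1, hG]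
    apply setIntegral_congr_fun hBmeas
    intro x _
    dsimp only
    congr 1
    rw [hsum η x]
    have h1 : ⟪η, x⟫ = S x + T x := by
      rw [hS, hT, hv, ← inner_add_left]
      congr 1
      abel
    rw [h1]
    push_cast
    ring
  -- Translate: the real Fourier transform of g vanishes
  have hFg : ∀ w : EuclideanSpace ℝ (Fin n),
      VectorFourier.fourierIntegral 𝐞 (volume : Measure (EuclideanSpace ℝ (Fin n)))
      (innerₗ (EuclideanSpace ℝ (Fin n))) g w = 0 := by
    intro w
    rw [VectorFourier.fourierIntegral]
    have h1 : ∀ x : EuclideanSpace ℝ (Fin n),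
        𝐞 (-(innerₗ (EuclideanSpace ℝ (Fin n))) x w) • g x
        = B.indicator (fun x => f x *
          Complex.exp (Complex.I * (∑ k, ((-2 * Real.pi) • w) k * x k : ℝ))) x := by
      intro x
      by_cases h : x ∈ B
      · rw [Set.indicator_of_mem h, hgdef, Set.indicator_of_mem h]
        rw [Circle.smul_def, Real.fourierChar_apply, smul_eq_mul]
        rw [mul_comm]
        congr 1
        rw [hsum ((-2 * Real.pi) • w) x]
        have h2 : ⟪((-2 * Real.pi) • w : EuclideanSpace ℝ (Fin n)), x⟫
            = (-2 * Real.pi) * ⟪w, x⟫ := real_inner_smul_left _ _ _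
        rw [h2]
        have h3 : (innerₗ (EuclideanSpace ℝ (Fin n))) x w = ⟪x, w⟫ := rfl
        rw [h3, real_inner_comm x w]
        push_cast
        ring
      · rw [Set.indicator_of_notMem h, hgdef, Set.indicator_of_notMem h, smul_zero]
    rw [integral_congr_ae (Eventually.of_forall h1), integral_indicator hBmeas]
    exact key _
  -- Duality with Schwartz functions to conclude g = 0 a.e.
  have hgzero : g =ᵐ[volume] 0 := by
    have hdual : ∀ ψ : SchwartzMap (EuclideanSpace ℝ (Fin n)) ℂ,
        ∫ x, g x * 𝓕 (fun y => ψ y : EuclideanSpace ℝ (Fin n) → ℂ) x = 0 := by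
      intro ψ
      have hflip := VectorFourier.integral_fourierIntegral_smul_eq_flip
        (L := innerₗ (EuclideanSpace ℝ (Fin n)))
        (μ := (volume : Measure (EuclideanSpace ℝ (Fin n))))
        (ν := (volume : Measure (EuclideanSpace ℝ (Fin n))))
        Real.continuous_fourierChar continuous_inner hgint ψ.integrable
      rw [flip_innerₗ] at hflip
      have hLHS : ∫ ξ, (VectorFourier.fourierIntegral 𝐞
          (volume : Measure (EuclideanSpace ℝ (Fin n)))
          (innerₗ (EuclideanSpace ℝ (Fin n))) g ξ) • ψ ξ = 0 := by
        apply integral_eq_zero_of_ae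
        filter_upwards with ξ
        simp [hFg ξ]
      rw [hLHS] at hflip
      have hsm : ∀ x : EuclideanSpace ℝ (Fin n),
          g x • (VectorFourier.fourierIntegral 𝐞
            (volume : Measure (EuclideanSpace ℝ (Fin n)))
            (innerₗ (EuclideanSpace ℝ (Fin n))) (fun y => ψ y) x)
          = g x * 𝓕 (fun y => ψ y : EuclideanSpace ℝ (Fin n) → ℂ) x := by
        intro x
        rfl
      rw [← integral_congr_ae (Eventually.of_forall hsm)]
      exact hflip.symm
    apply ae_eq_zero_of_integral_contDiff_smul_eq_zero (hgint.locallyIntegrable)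
    intro h hhsm hhsupp
    -- build the Schwartz map from h
    have hhC : ContDiff ℝ ∞ (fun x : EuclideanSpace ℝ (Fin n) => (h x : ℂ)) :=
      Complex.ofRealCLM.contDiff.comp hhsm
    have hhCsupp : HasCompactSupport (fun x : EuclideanSpace ℝ (Fin n) => (h x : ℂ)) :=
      hhsupp.comp_left (g := fun r : ℝ => (r : ℂ)) (by norm_num)
    set φ : SchwartzMap (EuclideanSpace ℝ (Fin n)) ℂ := mySchwartz _ hhC hhCsupp with hφ
    set ψ : SchwartzMap (EuclideanSpace ℝ (Fin n)) ℂ :=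
      (FourierTransform.fourierCLE ℂ (SchwartzMap (EuclideanSpace ℝ (Fin n)) ℂ)).symm φ with hψ
    have hFψ : 𝓕 (fun y => ψ y : EuclideanSpace ℝ (Fin n) → ℂ) = fun x => φ x := by
      have h1 : (FourierTransform.fourierCLE ℂ (SchwartzMap (EuclideanSpace ℝ (Fin n)) ℂ)) ψ = φ :=
        ContinuousLinearEquiv.apply_symm_apply _ φ
      have h2 := FourierTransform.fourierCLE_apply (R := ℂ) ψ
      rw [h1] at h2
      rw [h2, SchwartzMap.fourier_coe]
    have hint0 := hdual ψ
    rw [hFψ] at hint0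
    have heq : ∀ x : EuclideanSpace ℝ (Fin n), g x * φ x = h x • g x := by
      intro x
      have hφx : φ x = (h x : ℂ) := rfl
      rw [hφx, Complex.real_smul, mul_comm]
    rw [integral_congr_ae (Eventually.of_forall heq)] at hint0
    exact hint0
  exact hgf.symm.trans hgzero
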